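/- Let (V,P) be a mixing Markov chain. For every ε > 0 there exists T > 0 such that for all n and all u, v ∈ V_n, the probability under μ×μ that x_{n+T}^{2n+T-1} = y_{n+T}^{2n+T-1} given x_1^n = u and y_1^n = v is at least (1−ε)·Δ_n. -/

import Mathlib

open Finset Filter
open scoped ENNReal

noncomputable section

variable {V : Type*}

/-- `P` is a stochastic transition matrix. -/
def IsStochastic [Fintype V] (P : Matrix V V ℝ) : Prop :=
  (∀ u v, 0 ≤ P u v) ∧ ∀ u, ∑ v, P u v = 1

/-- The chain `(V,P)` is mixing: some power of `P` has all entries positive. -/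
def IsMixing [Fintype V] [DecidableEq V] (P : Matrix V V ℝ) : Prop :=
  ∃ n : ℕ, 0 < n ∧ ∀ u v, 0 < (P ^ n) u v

/-- `pi` is a stationary distribution for `P`. -/
def IsStationaryPi [Fintype V] (P : Matrix V V ℝ) (pi : V → ℝ) : Prop :=
  (∀ v, 0 ≤ pi v) ∧ (∑ v, pi v = 1) ∧ ∀ v, ∑ u, pi u * P u v = pi v

/-- One step of the chain killed on the set `B`. -/
def killedStep [Fintype V] [DecidableEq V] (P : Matrix V V ℝ) (B : Finset V) (ν : V → ℝ) : V → ℝ :=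
  fun v => ∑ u, if u ∈ B then 0 else ν u * P u v

/-- `avoidProb P B ν t = P_ν(T_B > t)`, the probability that the chain with initial
distribution `ν` avoids `B` at all times `0,…,t`; here `T_B = inf {t ≥ 0 : X_t ∈ B}`. -/
def avoidProb [Fintype V] [DecidableEq V] (P : Matrix V V ℝ) (B : Finset V) (ν : V → ℝ) (t : ℕ) : ℝ :=
  ∑ u, if u ∈ B then 0 else ((killedStep P B)^[t] ν) u

/-- Point mass at `v`. -/
def pointMass [DecidableEq V] (v : V) : V → ℝ := fun u => if u = v then 1 else 0

/-- `E_v(T_B)`, as an extended real (infinite if `B` is not reachable). -/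
def hitExp [Fintype V] [DecidableEq V] (P : Matrix V V ℝ) (B : Finset V) (v : V) : ℝ≥0∞ :=
  ∑' t : ℕ, ENNReal.ofReal (avoidProb P B (pointMass v) t)

/-- `m_B = max_v E_v(T_B)`. -/
def maxHitExp [Fintype V] [DecidableEq V] (P : Matrix V V ℝ) (B : Finset V) : ℝ≥0∞ :=
  ⨆ v : V, hitExp P B v

/-- Transition matrix of two independent walkers. -/
def prodMatrix (P : Matrix V V ℝ) : Matrix (V × V) (V × V) ℝ :=
  fun p q => P p.1 q.1 * P p.2 q.2

/-- The diagonal of `V × V`. -/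
def diagSet (V : Type*) [Fintype V] [DecidableEq V] : Finset (V × V) :=
  univ.filter fun p => p.1 = p.2

/-- `P(m(u,v) > t)`: the probability that two independent walkers started at `u` and `v`
have not met by time `t`. -/
def meetSurvival [Fintype V] [DecidableEq V] (P : Matrix V V ℝ) (u v : V) (t : ℕ) : ℝ :=
  avoidProb (prodMatrix P) (diagSet V) (pointMass (u, v)) t

/-- `E(m(u,v))`, the expected meeting time of walkers started at `u`, `v`. -/
def meetExp [Fintype V] [DecidableEq V] (P : Matrix V V ℝ) (u v : V) : ℝ :=
  ∑' t : ℕ, meetSurvival P u v t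

/-- `m* = max_{u,v} E(m(u,v))`. -/
def maxMeetExp [Fintype V] [DecidableEq V] (P : Matrix V V ℝ) : ℝ :=
  ⨆ p : V × V, meetExp P p.1 p.2

/-- `m̄ = Σ_{u,v} pi(u) pi(v) E(m(u,v))`. -/
def meanMeetExp [Fintype V] [DecidableEq V] (P : Matrix V V ℝ) (pi : V → ℝ) : ℝ :=
  ∑ u, ∑ v, pi u * pi v * meetExp P u v

/-- Transition matrix of the coalescing random walk: the state `f : V → V` records the
current position of the walker started at each site; walkers at the same site move together. -/
def coalMatrix [Fintype V] [DecidableEq V] (P : Matrix V V ℝ) : Matrix (V → V) (V → V) ℝ :=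
  fun f g =>
    if ∀ u v, f u = f v → g u = g v then
      ∏ s ∈ univ.image f, (if h : ∃ u, f u = s then P s (g h.choose) else 0)
    else 0

/-- Constant maps: the coalescing walk has fully coalesced exactly when its state is constant. -/
def constSet (V : Type*) [Fintype V] [DecidableEq V] : Finset (V → V) :=
  univ.filter fun f => ∀ u v : V, f u = f v

/-- `P(C > t)`: the probability that the coalescing random walk started with one walker on
each state has not fully coalesced by time `t`. -/
def coalSurvival [Fintype V] [DecidableEq V] (P : Matrix V V ℝ) (t : ℕ) : ℝ :=
  avoidProb (coalMatrix P) (constSet V) (pointMass id) t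

/-- `E(C)`, the expected full coalescence time. -/
def coalExp [Fintype V] [DecidableEq V] (P : Matrix V V ℝ) : ℝ :=
  ∑' t : ℕ, coalSurvival P t

/-- `E(C²)`, via the tail-sum formula `E(C²) = Σ_{t≥0} P(C > √t)`. -/
def coalMoment2 [Fintype V] [DecidableEq V] (P : Matrix V V ℝ) : ℝ :=
  ∑' t : ℕ, coalSurvival P (Nat.sqrt t)

/-- `μ(w) = pi(w_1) ∏ P(w_j, w_{j+1})`, the stationary measure of the word `w`. -/
def wordProb [Fintype V] (pi : V → ℝ) (P : Matrix V V ℝ) {n : ℕ} (w : Fin (n + 1) → V) : ℝ :=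
  pi (w 0) * ∏ i : Fin n, P (w i.castSucc) (w i.succ)

/-- The state space `V_n` of the `n`-block chain: words of length `n+1` of positive measure. -/
abbrev BlockStates [Fintype V] (pi : V → ℝ) (P : Matrix V V ℝ) (n : ℕ) : Type _ :=
  {w : Fin (n + 1) → V // 0 < wordProb pi P w}

/-- The transition matrix `P_n` of the `n`-block chain. -/
def blockMatrix [Fintype V] [DecidableEq V] (pi : V → ℝ) (P : Matrix V V ℝ) (n : ℕ) :
    Matrix (BlockStates pi P n) (BlockStates pi P n) ℝ :=
  fun u v =>
    if ∀ i : Fin n, u.1 i.succ = v.1 i.castSucc then P (u.1 (Fin.last n)) (v.1 (Fin.last n))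
    else 0

/-- The stationary distribution `π_n` of the `n`-block chain. -/
def blockPi [Fintype V] (pi : V → ℝ) (P : Matrix V V ℝ) (n : ℕ) :
    BlockStates pi P n → ℝ :=
  fun w => wordProb pi P w.1

/-- `Δ_n = Σ_{u ∈ V_n} μ(u)²`. -/
def blockDelta [Fintype V] (pi : V → ℝ) (P : Matrix V V ℝ) (n : ℕ) : ℝ :=
  ∑ w : Fin (n + 1) → V, (wordProb pi P w) ^ 2

/-- The entropy `h(V,P) = -Σ_{u,v} pi(u) P(u,v) log P(u,v)`. -/
def chainEntropy [Fintype V] (P : Matrix V V ℝ) (pi : V → ℝ) : ℝ :=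
  -∑ u, ∑ v, pi u * P u v * Real.log (P u v)

lemma pow_entry_nonneg [Fintype V] [DecidableEq V] {P : Matrix V V ℝ} (hP : IsStochastic P) :
    ∀ (k : ℕ) (x y : V), 0 ≤ (P ^ k) x y := by
  intro k
  induction k with
  | zero => intro x y; simp [Matrix.one_apply]; split <;> norm_num
  | succ k ih =>
    intro x y
    rw [pow_succ, Matrix.mul_apply]
    exact Finset.sum_nonneg fun t _ => mul_nonneg (ih x t) (hP.1 t y)

lemma pow_row_sum [Fintype V] [DecidableEq V] {P : Matrix V V ℝ} (hP : IsStochastic P) :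
    ∀ (k : ℕ) (x : V), ∑ y, (P ^ k) x y = 1 := by
  intro k
  induction k with
  | zero => intro x; simp [Matrix.one_apply]
  | succ k ih =>
    intro x
    simp only [pow_succ, Matrix.mul_apply]
    rw [Finset.sum_comm]
    calc ∑ t, ∑ y, (P ^ k) x t * P t y = ∑ t, (P ^ k) x t * ∑ y, P t y := by
          simp [Finset.mul_sum]
      _ = 1 := by simp [hP.2, ih]

lemma stat_pow [Fintype V] [DecidableEq V] {P : Matrix V V ℝ} {pi : V → ℝ} (hpi : IsStationaryPi P pi) :
    ∀ (k : ℕ) (s : V), ∑ u, pi u * (P ^ k) u s = pi s := by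
  intro k
  induction k with
  | zero => intro s; simp [Matrix.one_apply]
  | succ k ih =>
    intro s
    simp only [pow_succ, Matrix.mul_apply, Finset.mul_sum]
    rw [Finset.sum_comm]
    calc ∑ t, ∑ u, pi u * ((P ^ k) u t * P t s)
        = ∑ t, (∑ u, pi u * (P ^ k) u t) * P t s := by
          congr 1; ext t; rw [Finset.sum_mul]; congr 1; ext u; ring
      _ = pi s := by simp only [ih]; exact hpi.2.2 s

lemma pi_pos [Fintype V] [DecidableEq V] {P : Matrix V V ℝ} {pi : V → ℝ}
    (hP : IsStochastic P) (hmix : IsMixing P) (hpi : IsStationaryPi P pi) (s : V) :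
    0 < pi s := by
  obtain ⟨m, hm0, hm⟩ := hmix
  obtain ⟨u0, hu0⟩ : ∃ u0, 0 < pi u0 := by
    by_contra h
    push_neg at h
    have : ∑ v, pi v = 0 := le_antisymm (Finset.sum_nonpos fun v _ => h v)
      (Finset.sum_nonneg fun v _ => hpi.1 v)
    rw [hpi.2.1] at this; norm_num at this
  have := stat_pow hpi m s
  calc (0:ℝ) < pi u0 * (P ^ m) u0 s := mul_pos hu0 (hm u0 s)
    _ ≤ ∑ u, pi u * (P ^ m) u s := Finset.single_le_sum (f := fun u => pi u * (P ^ m) u s)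
        (fun u _ => mul_nonneg (hpi.1 u) (pow_entry_nonneg hP m u s)) (mem_univ u0)
    _ = pi s := this

lemma doeblin_step [Fintype V] [DecidableEq V] {P : Matrix V V ℝ} {pi : V → ℝ}
    (hP : IsStochastic P) (hpi : IsStationaryPi P pi)
    {m : ℕ} {θ : ℝ} (hθ0 : 0 < θ) (hθ : ∀ u v, θ * pi v ≤ (P ^ m) u v) (hθ1 : θ ≤ 1) :
    ∀ (k : ℕ) (x s : V), (1 - (1 - θ) ^ k) * pi s ≤ (P ^ (m * k)) x s := by
  intro k
  induction k with
  | zero => intro x s; simpa using pow_entry_nonneg hP 0 x s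
  | succ k ih =>
    intro x s
    have hβ0 : (0:ℝ) ≤ 1 - (1 - θ) ^ k := by
      have h1 : (1 - θ) ^ k ≤ 1 := by
        apply pow_le_one₀ <;> linarith
      linarith
    have hmk : m * (k + 1) = m * k + m := by ring
    rw [hmk, show (P ^ (m*k+m)) = P ^ (m*k) * P ^ m from pow_add P (m*k) m, Matrix.mul_apply]
    have key : ∀ t : V, (1 - (1 - θ) ^ k) * pi t * ((P ^ m) t s - θ * pi s) + (P ^ (m*k)) x t * (θ * pi s)
        ≤ (P ^ (m * k)) x t * (P ^ m) t s := by
      intro t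
      have h1 : (1 - (1 - θ) ^ k) * pi t * ((P ^ m) t s - θ * pi s) ≤
          (P ^ (m*k)) x t * ((P ^ m) t s - θ * pi s) := by
        apply mul_le_mul_of_nonneg_right (ih x t)
        have := hθ t s; linarith
      nlinarith [h1]
    calc (1 - (1 - θ) ^ (k+1)) * pi s
        = ∑ t, ((1 - (1 - θ) ^ k) * pi t * ((P ^ m) t s - θ * pi s) + (P ^ (m*k)) x t * (θ * pi s)) := by
          rw [Finset.sum_add_distrib]
          have e1 : ∑ t, (1 - (1 - θ) ^ k) * pi t * ((P ^ m) t s - θ * pi s)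
              = (1 - (1 - θ) ^ k) * ((1 - θ) * pi s) := by
            have e : ∀ t, (1 - (1-θ)^k) * pi t * ((P^m) t s - θ * pi s)
                = (1 - (1-θ)^k) * (pi t * (P^m) t s) - (1-(1-θ)^k) * ((θ * pi s) * pi t) := by
              intro t; ring
            simp only [e]
            rw [Finset.sum_sub_distrib, ← Finset.mul_sum, ← Finset.mul_sum, ← Finset.mul_sum,
              stat_pow hpi, hpi.2.1]
            ring
          have e2 : ∑ t, (P ^ (m*k)) x t * (θ * pi s) = θ * pi s := by
            rw [← Finset.sum_mul, pow_row_sum hP, one_mul]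
          rw [e1, e2]; ring
      _ ≤ ∑ t, (P ^ (m * k)) x t * (P ^ m) t s := Finset.sum_le_sum fun t _ => key t

lemma doeblin [Fintype V] [DecidableEq V] {P : Matrix V V ℝ} {pi : V → ℝ}
    (hP : IsStochastic P) (hmix : IsMixing P) (hpi : IsStationaryPi P pi) :
    ∀ ε > (0:ℝ), ∃ T : ℕ, 0 < T ∧ ∀ x s, (1 - ε) * pi s ≤ (P ^ T) x s := by
  intro ε hε
  obtain ⟨m, hm0, hm⟩ := hmix
  have hne : Nonempty V := by
    by_contra h
    have : ∑ v, pi v = 0 := by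
      rw [Finset.sum_eq_zero]; intro v _; exact absurd ⟨v⟩ h
    rw [hpi.2.1] at this; norm_num at this
  obtain ⟨x0⟩ := hne
  -- choose θ
  obtain ⟨p0, -, hp0⟩ := Finset.exists_min_image (univ : Finset (V × V))
    (fun p => (P ^ m) p.1 p.2 / pi p.2) ⟨(x0, x0), mem_univ _⟩
  set c := (P ^ m) p0.1 p0.2 / pi p0.2 with hc
  have hπpos : ∀ s, 0 < pi s := pi_pos hP ⟨m, hm0, hm⟩ hpi
  have hc0 : 0 < c := div_pos (hm _ _) (hπpos _)
  set θ := min c (1/2) with hθdef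
  have hθ0 : 0 < θ := lt_min hc0 (by norm_num)
  have hθ1 : θ ≤ 1 := le_trans (min_le_right _ _) (by norm_num)
  have hθ : ∀ u v, θ * pi v ≤ (P ^ m) u v := by
    intro u v
    have h1 : θ ≤ (P ^ m) u v / pi v := le_trans (min_le_left _ _) (hp0 (u, v) (mem_univ _))
    calc θ * pi v ≤ ((P ^ m) u v / pi v) * pi v :=
          mul_le_mul_of_nonneg_right h1 (hπpos v).le
      _ = (P ^ m) u v := div_mul_cancel₀ _ (hπpos v).ne'
  obtain ⟨k, hk⟩ := exists_pow_lt_of_lt_one hε (show 1 - θ < 1 by linarith)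
  refine ⟨m * (k + 1), Nat.mul_pos hm0 k.succ_pos, fun x s => ?_⟩
  have h1 : (1 - (1 - θ) ^ (k+1)) * pi s ≤ (P ^ (m * (k+1))) x s :=
    doeblin_step hP hpi hθ0 hθ hθ1 (k+1) x s
  have h2 : (1 - θ) ^ (k + 1) ≤ (1 - θ) ^ k := by
    apply pow_le_pow_of_le_one (by linarith) (by linarith)
    omega
  have : (1 - ε) * pi s ≤ (1 - (1 - θ) ^ (k+1)) * pi s := by
    apply mul_le_mul_of_nonneg_right _ (hπpos s).le
    nlinarith
  linarith

lemma wordProb_nonneg [Fintype V] {pi : V → ℝ} {P : Matrix V V ℝ}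
    (hP : IsStochastic P) (hpi0 : ∀ v, 0 ≤ pi v) {n : ℕ} (w : Fin (n+1) → V) :
    0 ≤ wordProb pi P w :=
  mul_nonneg (hpi0 _) (Finset.prod_nonneg fun i _ => hP.1 _ _)

lemma wordProb_snoc [Fintype V] (pi : V → ℝ) (P : Matrix V V ℝ) {m : ℕ}
    (w : Fin (m+1) → V) (b : V) :
    wordProb pi P (Fin.snoc w b : Fin (m+1+1) → V) = wordProb pi P w * P (w (Fin.last m)) b := by
  unfold wordProb
  rw [Fin.prod_univ_castSucc]
  have h0 : (Fin.snoc w b : Fin (m+1+1) → V) 0 = w 0 := by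
    rw [← Fin.castSucc_zero, Fin.snoc_castSucc]
  simp only [h0, Fin.succ_castSucc, Fin.snoc_castSucc, Fin.succ_last, Fin.snoc_last]
  ring

lemma sum_snoc [Fintype V] [DecidableEq V] {N : ℕ} (f : (Fin (N+1) → V) → ℝ) :
    ∑ w : Fin (N+1) → V, f w = ∑ w : Fin N → V, ∑ b : V, f (Fin.snoc w b) := by
  rw [← (Fin.snocEquiv (fun _ => V)).sum_comp f, Fintype.sum_prod_type]
  rw [Finset.sum_comm]
  rfl

lemma sum_prefix_last [Fintype V] [DecidableEq V] (P : Matrix V V ℝ) (pi : V → ℝ)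
    {n : ℕ} (u : Fin (n+1) → V) :
    ∀ (k : ℕ) (y : V),
    (∑ w : Fin (n+k+1) → V,
        if (∀ i : Fin (n+1), w ⟨i.1, by have := i.isLt; omega⟩ = u i) ∧ w (Fin.last (n+k)) = y
        then wordProb pi P w else 0)
    = wordProb pi P u * (P ^ k) (u (Fin.last n)) y := by
  intro k
  induction k with
  | zero =>
    intro y
    show (∑ w : Fin (n+1) → V,
        if (∀ i : Fin (n+1), w ⟨i.1, i.isLt⟩ = u i) ∧ w (Fin.last n) = y
        then wordProb pi P w else 0) = wordProb pi P u * (P ^ 0) (u (Fin.last n)) y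
    rw [Finset.sum_eq_single u]
    · by_cases h : u (Fin.last n) = y
      · rw [if_pos ⟨fun i => rfl, h⟩, pow_zero, Matrix.one_apply, if_pos h, mul_one]
      · rw [if_neg (fun hc => h hc.2), pow_zero, Matrix.one_apply, if_neg h, mul_zero]
    · intro w _ hw
      rw [if_neg]
      rintro ⟨h1, -⟩
      exact hw (funext fun i => h1 i)
    · intro h; exact absurd (Finset.mem_univ u) h
  | succ k ih =>
    intro y
    show (∑ w : Fin ((n+k+1)+1) → V,
        if (∀ i : Fin (n+1), w ⟨i.1, by have := i.isLt; omega⟩ = u i) ∧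
            w (Fin.last (n+k+1)) = y
        then wordProb pi P w else 0)
      = wordProb pi P u * (P ^ (k+1)) (u (Fin.last n)) y
    rw [sum_snoc]
    have step1 : ∀ (w : Fin (n+k+1) → V) (b : V),
        (if (∀ i : Fin (n+1),
              (Fin.snoc w b : Fin ((n+k+1)+1) → V) ⟨i.1, by have := i.isLt; omega⟩ = u i) ∧
            (Fin.snoc w b : Fin ((n+k+1)+1) → V) (Fin.last (n+k+1)) = y
         then wordProb pi P (Fin.snoc w b : Fin ((n+k+1)+1) → V) else 0)
        = if b = y then (if (∀ i : Fin (n+1), w ⟨i.1, by have := i.isLt; omega⟩ = u i)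
             then wordProb pi P w * P (w (Fin.last (n+k))) b else 0) else 0 := by
      intro w b
      have hsl : (Fin.snoc w b : Fin ((n+k+1)+1) → V) (Fin.last (n+k+1)) = b :=
        Fin.snoc_last _ _
      have hpre : ∀ i : Fin (n+1), (Fin.snoc w b : Fin ((n+k+1)+1) → V)
          ⟨i.1, by have := i.isLt; omega⟩ = w ⟨i.1, by have := i.isLt; omega⟩ := by
        intro i
        have h : (⟨i.1, by have := i.isLt; omega⟩ : Fin ((n+k+1)+1)) =
            Fin.castSucc ⟨i.1, by have := i.isLt; omega⟩ := rfl
        rw [h, Fin.snoc_castSucc]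
      by_cases hb : b = y
      · by_cases hA : ∀ i : Fin (n+1), w ⟨i.1, by have := i.isLt; omega⟩ = u i
        · rw [if_pos ⟨fun i => (hpre i).trans (hA i), hsl.trans hb⟩, if_pos hb, if_pos hA,
            wordProb_snoc]
        · rw [if_neg, if_pos hb, if_neg hA]
          rintro ⟨h1, -⟩
          exact hA fun i => (hpre i).symm.trans (h1 i)
      · rw [if_neg, if_neg hb]
        rintro ⟨-, h2⟩
        exact hb (hsl.symm.trans h2)
    simp only [step1]
    have step2 : ∀ w : Fin (n+k+1) → V,
        (∑ b, if b = y then (if (∀ i : Fin (n+1), w ⟨i.1, by have := i.isLt; omega⟩ = u i)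
            then wordProb pi P w * P (w (Fin.last (n+k))) b else 0) else 0)
        = if (∀ i : Fin (n+1), w ⟨i.1, by have := i.isLt; omega⟩ = u i)
            then wordProb pi P w * P (w (Fin.last (n+k))) y else 0 := by
      intro w
      rw [Finset.sum_ite_eq' Finset.univ y]
      simp only [Finset.mem_univ, if_true]
    simp only [step2]
    have step3 : ∀ w : Fin (n+k+1) → V,
        (if (∀ i : Fin (n+1), w ⟨i.1, by have := i.isLt; omega⟩ = u i)
            then wordProb pi P w * P (w (Fin.last (n+k))) y else 0)
        = ∑ s : V, (if (∀ i : Fin (n+1), w ⟨i.1, by have := i.isLt; omega⟩ = u i) ∧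
              w (Fin.last (n+k)) = s
            then wordProb pi P w else 0) * P s y := by
      intro w
      by_cases hA : ∀ i : Fin (n+1), w ⟨i.1, by have := i.isLt; omega⟩ = u i
      · rw [if_pos hA, Finset.sum_eq_single (w (Fin.last (n+k)))]
        · rw [if_pos ⟨hA, rfl⟩]
        · intro s _ hs
          rw [if_neg, zero_mul]
          rintro ⟨-, h2⟩; exact hs h2.symm
        · intro h; exact absurd (Finset.mem_univ _) h
      · rw [if_neg hA, Finset.sum_eq_zero]
        intro s _
        rw [if_neg, zero_mul]
        rintro ⟨h1, -⟩; exact hA h1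
    simp only [step3]
    rw [Finset.sum_comm]
    have step4 : ∀ s : V,
        (∑ w : Fin (n+k+1) → V,
          (if (∀ i : Fin (n+1), w ⟨i.1, by have := i.isLt; omega⟩ = u i) ∧
              w (Fin.last (n+k)) = s
            then wordProb pi P w else 0) * P s y)
        = wordProb pi P u * (P ^ k) (u (Fin.last n)) s * P s y := by
      intro s
      rw [← Finset.sum_mul, ih s]
    simp only [step4]
    rw [pow_succ, Matrix.mul_apply, Finset.mul_sum]
    exact Finset.sum_congr rfl fun s _ => by ring

lemma sum_prefix_block [Fintype V] [DecidableEq V] (P : Matrix V V ℝ) (pi : V → ℝ)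
    {n : ℕ} (T : ℕ) (u : Fin (n+1) → V) :
    ∀ (j : ℕ) (a : Fin (j+1) → V),
    (∑ w : Fin (n+T+j+1) → V,
        if (∀ i : Fin (n+1), w ⟨i.1, by have := i.isLt; omega⟩ = u i) ∧
           (∀ i : Fin (j+1), w ⟨n + T + i.1, by have := i.isLt; omega⟩ = a i)
        then wordProb pi P w else 0)
    = wordProb pi P u * (P ^ T) (u (Fin.last n)) (a 0) *
        ∏ i : Fin j, P (a i.castSucc) (a i.succ) := by
  intro j
  induction j with
  | zero =>
    intro a
    have e : ∀ w : Fin (n+T+1) → V,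
        ((∀ i : Fin (0+1), w ⟨n + T + i.1, by have := i.isLt; omega⟩ = a i) ↔
          w (Fin.last (n+T)) = a 0) := by
      intro w
      constructor
      · intro h; exact h 0
      · intro h i
        have hi : i = 0 := Fin.eq_zero i
        rw [hi]; exact h
    calc (∑ w : Fin (n+T+0+1) → V,
          if (∀ i : Fin (n+1), w ⟨i.1, by have := i.isLt; omega⟩ = u i) ∧
             (∀ i : Fin (0+1), w ⟨n + T + i.1, by have := i.isLt; omega⟩ = a i)
          then wordProb pi P w else 0)
        = ∑ w : Fin (n+T+1) → V,
          if (∀ i : Fin (n+1), w ⟨i.1, by have := i.isLt; omega⟩ = u i) ∧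
             w (Fin.last (n+T)) = a 0
          then wordProb pi P w else 0 :=
          Finset.sum_congr rfl fun w _ => if_congr (and_congr_right' (e w)) rfl rfl
      _ = wordProb pi P u * (P ^ T) (u (Fin.last n)) (a 0) := sum_prefix_last P pi u T (a 0)
      _ = wordProb pi P u * (P ^ T) (u (Fin.last n)) (a 0) *
            ∏ i : Fin 0, P (a i.castSucc) (a i.succ) := by simp
  | succ j ih =>
    intro a
    show (∑ w : Fin ((n+T+j+1)+1) → V,
        if (∀ i : Fin (n+1), w ⟨i.1, by have := i.isLt; omega⟩ = u i) ∧
           (∀ i : Fin (j+2), w ⟨n + T + i.1, by have := i.isLt; omega⟩ = a i)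
        then wordProb pi P w else 0)
      = wordProb pi P u * (P ^ T) (u (Fin.last n)) (a 0) *
          ∏ i : Fin (j+1), P (a i.castSucc) (a i.succ)
    rw [sum_snoc]
    have step1 : ∀ (w : Fin (n+T+j+1) → V) (b : V),
        (if (∀ i : Fin (n+1),
              (Fin.snoc w b : Fin ((n+T+j+1)+1) → V) ⟨i.1, by have := i.isLt; omega⟩ = u i) ∧
            (∀ i : Fin (j+2),
              (Fin.snoc w b : Fin ((n+T+j+1)+1) → V) ⟨n + T + i.1, by have := i.isLt; omega⟩ = a i)
         then wordProb pi P (Fin.snoc w b : Fin ((n+T+j+1)+1) → V) else 0)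
        = if b = a (Fin.last (j+1)) then
            (if (∀ i : Fin (n+1), w ⟨i.1, by have := i.isLt; omega⟩ = u i) ∧
                (∀ i : Fin (j+1), w ⟨n + T + i.1, by have := i.isLt; omega⟩ = a i.castSucc)
             then wordProb pi P w * P (a (Fin.castSucc (Fin.last j))) (a (Fin.last (j+1))) else 0)
          else 0 := by
      intro w b
      have hpre : ∀ i : Fin (n+1), (Fin.snoc w b : Fin ((n+T+j+1)+1) → V)
          ⟨i.1, by have := i.isLt; omega⟩ = w ⟨i.1, by have := i.isLt; omega⟩ := by
        intro i
        have h : (⟨i.1, by have := i.isLt; omega⟩ : Fin ((n+T+j+1)+1)) =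
            Fin.castSucc ⟨i.1, by have := i.isLt; omega⟩ := rfl
        rw [h, Fin.snoc_castSucc]
      have hblk : ∀ i : Fin (j+1), (Fin.snoc w b : Fin ((n+T+j+1)+1) → V)
          ⟨n + T + (Fin.castSucc i).1, by have := i.isLt; omega⟩ =
          w ⟨n + T + i.1, by have := i.isLt; omega⟩ := by
        intro i
        have h : (⟨n + T + (Fin.castSucc i).1, by have := i.isLt; omega⟩ : Fin ((n+T+j+1)+1)) =
            Fin.castSucc ⟨n + T + i.1, by have := i.isLt; omega⟩ := rfl
        rw [h, Fin.snoc_castSucc]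
      have hlst : (Fin.snoc w b : Fin ((n+T+j+1)+1) → V)
          ⟨n + T + (Fin.last (j+1)).1, by omega⟩ = b := by
        have h : (⟨n + T + (Fin.last (j+1)).1, by omega⟩ : Fin ((n+T+j+1)+1)) =
            Fin.last (n+T+j+1) := by
          apply Fin.ext; simp; omega
        rw [h, Fin.snoc_last]
      have hsplit : (∀ i : Fin (j+2),
            (Fin.snoc w b : Fin ((n+T+j+1)+1) → V) ⟨n + T + i.1, by have := i.isLt; omega⟩ = a i)
          ↔ (∀ i : Fin (j+1), w ⟨n + T + i.1, by have := i.isLt; omega⟩ = a i.castSucc) ∧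
            b = a (Fin.last (j+1)) := by
        rw [Fin.forall_fin_succ']
        constructor
        · rintro ⟨h1, h2⟩
          exact ⟨fun i => (hblk i).symm.trans (h1 i), hlst.symm.trans h2⟩
        · rintro ⟨h1, h2⟩
          exact ⟨fun i => (hblk i).trans (h1 i), hlst.trans h2⟩
      by_cases hb : b = a (Fin.last (j+1))
      · by_cases hA : (∀ i : Fin (n+1), w ⟨i.1, by have := i.isLt; omega⟩ = u i) ∧
            (∀ i : Fin (j+1), w ⟨n + T + i.1, by have := i.isLt; omega⟩ = a i.castSucc)
        · rw [if_pos ⟨fun i => (hpre i).trans (hA.1 i), hsplit.2 ⟨hA.2, hb⟩⟩, if_pos hb,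
            if_pos hA, wordProb_snoc]
          congr 2
          exact hA.2 (Fin.last j)
        · rw [if_neg, if_pos hb, if_neg hA]
          rintro ⟨h1, h2⟩
          exact hA ⟨fun i => (hpre i).symm.trans (h1 i), (hsplit.1 h2).1⟩
      · rw [if_neg, if_neg hb]
        rintro ⟨-, h2⟩
        exact hb (hsplit.1 h2).2
    simp only [step1]
    have step2 : ∀ w : Fin (n+T+j+1) → V,
        (∑ b, if b = a (Fin.last (j+1)) then
            (if (∀ i : Fin (n+1), w ⟨i.1, by have := i.isLt; omega⟩ = u i) ∧
                (∀ i : Fin (j+1), w ⟨n + T + i.1, by have := i.isLt; omega⟩ = a i.castSucc)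
             then wordProb pi P w * P (a (Fin.castSucc (Fin.last j))) (a (Fin.last (j+1))) else 0)
          else 0)
        = (if (∀ i : Fin (n+1), w ⟨i.1, by have := i.isLt; omega⟩ = u i) ∧
                (∀ i : Fin (j+1), w ⟨n + T + i.1, by have := i.isLt; omega⟩ = a i.castSucc)
             then wordProb pi P w else 0) *
            P (a (Fin.castSucc (Fin.last j))) (a (Fin.last (j+1))) := by
      intro w
      rw [Finset.sum_ite_eq' Finset.univ (a (Fin.last (j+1)))]
      rw [if_pos (Finset.mem_univ _), ite_mul, zero_mul]
    simp only [step2]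
    rw [← Finset.sum_mul]
    have key := ih (fun i => a (Fin.castSucc i))
    rw [Fin.castSucc_zero] at key
    rw [key]
    rw [Fin.prod_univ_castSucc (f := fun i : Fin (j+1) => P (a i.castSucc) (a i.succ))]
    simp only [Fin.succ_castSucc, Fin.succ_last]
    ring

lemma wordProb_congr [Fintype V] (pi : V → ℝ) (P : Matrix V V ℝ) {M N : ℕ} (h : M = N)
    (w : Fin (N+1) → V) :
    wordProb pi P (fun i : Fin (M+1) => w (Fin.cast (by omega) i)) = wordProb pi P w := by
  subst h; rfl


set_option maxHeartbeats 1000000 in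
/-- for every `ε > 0` there is `T > 0` such that for all `n` and all words
`u, v` of length `n+1` with positive measure, the `μ×μ`-probability that two stationary
paths start with blocks `u`, `v` and agree on the block of length `n+1` starting at
position `n+1+T` is at least `(1-ε)·Δ_n·μ(u)·μ(v)` — i.e., the conditional probability of
the later blocks agreeing given the initial blocks is at least `(1-ε)·Δ_n`. -/
theorem conditional_meeting_bound [Fintype V] [DecidableEq V] (P : Matrix V V ℝ)
    (hP : IsStochastic P) (hmix : IsMixing P) (pi : V → ℝ) (hpi : IsStationaryPi P pi) :
    ∀ ε > (0 : ℝ), ∃ T : ℕ, 0 < T ∧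
      ∀ (n : ℕ) (u v : Fin (n + 1) → V), 0 < wordProb pi P u → 0 < wordProb pi P v →
        (1 - ε) * blockDelta pi P n * (wordProb pi P u * wordProb pi P v) ≤
          ∑ w : Fin (2 * n + T + 1) → V, ∑ z : Fin (2 * n + T + 1) → V,
            if (∀ i : Fin (n + 1),
                  w ⟨i.1, by have := i.isLt; omega⟩ = u i ∧
                  z ⟨i.1, by have := i.isLt; omega⟩ = v i) ∧
               (∀ i : Fin (n + 1),
                  w ⟨n + T + i.1, by have := i.isLt; omega⟩ =
                  z ⟨n + T + i.1, by have := i.isLt; omega⟩)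
            then wordProb pi P w * wordProb pi P z else 0 := by
  intro ε hε
  have hε₁0 : (0:ℝ) < min ε 1 / 2 := by
    have := lt_min hε one_pos; linarith
  obtain ⟨T, hT0, hTb⟩ := doeblin hP hmix hpi (min ε 1 / 2) hε₁0
  refine ⟨T, hT0, ?_⟩
  intro n u v hu hv
  have step0 : ∀ w z : Fin (2*n+T+1) → V,
      (if (∀ i : Fin (n + 1), w ⟨i.1, by have := i.isLt; omega⟩ = u i ∧
            z ⟨i.1, by have := i.isLt; omega⟩ = v i) ∧
          (∀ i : Fin (n + 1), w ⟨n + T + i.1, by have := i.isLt; omega⟩ =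
            z ⟨n + T + i.1, by have := i.isLt; omega⟩)
       then wordProb pi P w * wordProb pi P z else 0)
      = ∑ a : Fin (n+1) → V,
          (if (∀ i : Fin (n + 1), w ⟨i.1, by have := i.isLt; omega⟩ = u i) ∧
              (∀ i : Fin (n + 1), w ⟨n + T + i.1, by have := i.isLt; omega⟩ = a i)
           then wordProb pi P w else 0) *
          (if (∀ i : Fin (n + 1), z ⟨i.1, by have := i.isLt; omega⟩ = v i) ∧
              (∀ i : Fin (n + 1), z ⟨n + T + i.1, by have := i.isLt; omega⟩ = a i)
           then wordProb pi P z else 0) := by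
    intro w z
    by_cases hA1 : ∀ i : Fin (n + 1), w ⟨i.1, by have := i.isLt; omega⟩ = u i
    · by_cases hA2 : ∀ i : Fin (n + 1), z ⟨i.1, by have := i.isLt; omega⟩ = v i
      · by_cases hB : ∀ i : Fin (n + 1), w ⟨n + T + i.1, by have := i.isLt; omega⟩ =
            z ⟨n + T + i.1, by have := i.isLt; omega⟩
        · rw [if_pos ⟨fun i => ⟨hA1 i, hA2 i⟩, hB⟩, Finset.sum_eq_single
            (fun i : Fin (n+1) => w ⟨n + T + i.1, by have := i.isLt; omega⟩)]
          · rw [if_pos ⟨hA1, fun i => rfl⟩, if_pos ⟨hA2, fun i => (hB i).symm⟩]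
          · intro a _ ha
            rcases Classical.em ((∀ i : Fin (n + 1), w ⟨i.1, by have := i.isLt; omega⟩ = u i) ∧
                (∀ i : Fin (n + 1), w ⟨n + T + i.1, by have := i.isLt; omega⟩ = a i))
              with h1 | h1
            · exact absurd (funext fun i => (h1.2 i).symm) ha
            · rw [if_neg h1, zero_mul]
          · intro hmem; exact absurd (Finset.mem_univ _) hmem
        · rw [if_neg (fun hc => hB hc.2), Finset.sum_eq_zero]
          intro a _
          rcases Classical.em ((∀ i : Fin (n + 1), z ⟨i.1, by have := i.isLt; omega⟩ = v i) ∧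
              (∀ i : Fin (n + 1), z ⟨n + T + i.1, by have := i.isLt; omega⟩ = a i))
            with h2 | h2
          · rcases Classical.em ((∀ i : Fin (n + 1), w ⟨i.1, by have := i.isLt; omega⟩ = u i) ∧
                (∀ i : Fin (n + 1), w ⟨n + T + i.1, by have := i.isLt; omega⟩ = a i))
              with h1 | h1
            · exact absurd (fun i => (h1.2 i).trans (h2.2 i).symm) hB
            · rw [if_neg h1, zero_mul]
          · have hz : (if (∀ i : Fin (n + 1), z ⟨i.1, by have := i.isLt; omega⟩ = v i) ∧
                (∀ i : Fin (n + 1), z ⟨n + T + i.1, by have := i.isLt; omega⟩ = a i)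
                then wordProb pi P z else 0) = 0 := if_neg h2
            rw [hz, mul_zero]
      · rw [if_neg (fun hc => hA2 fun i => (hc.1 i).2), Finset.sum_eq_zero]
        intro a _
        have hz : (if (∀ i : Fin (n + 1), z ⟨i.1, by have := i.isLt; omega⟩ = v i) ∧
            (∀ i : Fin (n + 1), z ⟨n + T + i.1, by have := i.isLt; omega⟩ = a i)
            then wordProb pi P z else 0) = 0 := if_neg (fun hc => hA2 hc.1)
        rw [hz, mul_zero]
    · rw [if_neg (fun hc => hA1 fun i => (hc.1 i).1), Finset.sum_eq_zero]
      intro a _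
      rw [if_neg (fun hc => hA1 hc.1), zero_mul]
  have hbridge : ∀ (x : Fin (n+1) → V) (a : Fin (n+1) → V),
      (∑ w : Fin (2*n+T+1) → V,
        if (∀ i : Fin (n + 1), w ⟨i.1, by have := i.isLt; omega⟩ = x i) ∧
            (∀ i : Fin (n + 1), w ⟨n + T + i.1, by have := i.isLt; omega⟩ = a i)
         then wordProb pi P w else 0)
      = ∑ w : Fin (n+T+n+1) → V,
        if (∀ i : Fin (n + 1), w ⟨i.1, by have := i.isLt; omega⟩ = x i) ∧
            (∀ i : Fin (n + 1), w ⟨n + T + i.1, by have := i.isLt; omega⟩ = a i)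
         then wordProb pi P w else 0 := by
    intro x a
    refine (Fintype.sum_equiv
      (Equiv.arrowCongr (finCongr (by omega : n+T+n+1 = 2*n+T+1)) (Equiv.refl V)) _ _ ?_).symm
    intro w'
    have hew : (Equiv.arrowCongr (finCongr (by omega : n+T+n+1 = 2*n+T+1)) (Equiv.refl V)) w'
        = fun j : Fin (2*n+T+1) => w' (Fin.cast (by omega : 2*n+T+1 = n+T+n+1) j) := rfl
    rw [hew]
    by_cases hc : (∀ i : Fin (n + 1), w' ⟨i.1, by have := i.isLt; omega⟩ = x i) ∧
        (∀ i : Fin (n + 1), w' ⟨n + T + i.1, by have := i.isLt; omega⟩ = a i)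
    · rw [if_pos hc, if_pos (⟨fun i => hc.1 i, fun i => hc.2 i⟩ :
        (∀ i : Fin (n + 1), (fun j : Fin (2*n+T+1) =>
            w' (Fin.cast (by omega : 2*n+T+1 = n+T+n+1) j)) ⟨i.1, by have := i.isLt; omega⟩ = x i) ∧
        (∀ i : Fin (n + 1), (fun j : Fin (2*n+T+1) =>
            w' (Fin.cast (by omega : 2*n+T+1 = n+T+n+1) j))
              ⟨n + T + i.1, by have := i.isLt; omega⟩ = a i))]
      exact (wordProb_congr pi P (by omega : 2*n+T = n+T+n) w').symm
    · rw [if_neg hc, if_neg]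
      intro h
      exact hc ⟨fun i => h.1 i, fun i => h.2 i⟩
  have M1 : (∑ w : Fin (2 * n + T + 1) → V, ∑ z : Fin (2 * n + T + 1) → V,
        if (∀ i : Fin (n + 1),
              w ⟨i.1, by have := i.isLt; omega⟩ = u i ∧
              z ⟨i.1, by have := i.isLt; omega⟩ = v i) ∧
           (∀ i : Fin (n + 1),
              w ⟨n + T + i.1, by have := i.isLt; omega⟩ =
              z ⟨n + T + i.1, by have := i.isLt; omega⟩)
        then wordProb pi P w * wordProb pi P z else 0)
      = ∑ a : Fin (n+1) → V,
          (wordProb pi P u * (P ^ T) (u (Fin.last n)) (a 0) *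
            ∏ i : Fin n, P (a i.castSucc) (a i.succ)) *
          (wordProb pi P v * (P ^ T) (v (Fin.last n)) (a 0) *
            ∏ i : Fin n, P (a i.castSucc) (a i.succ)) := by
    calc (∑ w : Fin (2 * n + T + 1) → V, ∑ z : Fin (2 * n + T + 1) → V,
          if (∀ i : Fin (n + 1),
                w ⟨i.1, by have := i.isLt; omega⟩ = u i ∧
                z ⟨i.1, by have := i.isLt; omega⟩ = v i) ∧
             (∀ i : Fin (n + 1),
                w ⟨n + T + i.1, by have := i.isLt; omega⟩ =
                z ⟨n + T + i.1, by have := i.isLt; omega⟩)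
          then wordProb pi P w * wordProb pi P z else 0)
        = ∑ w : Fin (2*n+T+1) → V, ∑ z : Fin (2*n+T+1) → V, ∑ a : Fin (n+1) → V,
            (if (∀ i : Fin (n + 1), w ⟨i.1, by have := i.isLt; omega⟩ = u i) ∧
                (∀ i : Fin (n + 1), w ⟨n + T + i.1, by have := i.isLt; omega⟩ = a i)
             then wordProb pi P w else 0) *
            (if (∀ i : Fin (n + 1), z ⟨i.1, by have := i.isLt; omega⟩ = v i) ∧
                (∀ i : Fin (n + 1), z ⟨n + T + i.1, by have := i.isLt; omega⟩ = a i)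
             then wordProb pi P z else 0) := by
          simp only [step0]
      _ = ∑ a : Fin (n+1) → V, ∑ w : Fin (2*n+T+1) → V, ∑ z : Fin (2*n+T+1) → V,
            (if (∀ i : Fin (n + 1), w ⟨i.1, by have := i.isLt; omega⟩ = u i) ∧
                (∀ i : Fin (n + 1), w ⟨n + T + i.1, by have := i.isLt; omega⟩ = a i)
             then wordProb pi P w else 0) *
            (if (∀ i : Fin (n + 1), z ⟨i.1, by have := i.isLt; omega⟩ = v i) ∧
                (∀ i : Fin (n + 1), z ⟨n + T + i.1, by have := i.isLt; omega⟩ = a i)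
             then wordProb pi P z else 0) := by
          refine Eq.trans (Finset.sum_congr rfl fun w _ => Finset.sum_comm) ?_
          exact Finset.sum_comm
      _ = ∑ a : Fin (n+1) → V,
            (∑ w : Fin (2*n+T+1) → V,
              if (∀ i : Fin (n + 1), w ⟨i.1, by have := i.isLt; omega⟩ = u i) ∧
                  (∀ i : Fin (n + 1), w ⟨n + T + i.1, by have := i.isLt; omega⟩ = a i)
               then wordProb pi P w else 0) *
            (∑ z : Fin (2*n+T+1) → V,
              if (∀ i : Fin (n + 1), z ⟨i.1, by have := i.isLt; omega⟩ = v i) ∧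
                  (∀ i : Fin (n + 1), z ⟨n + T + i.1, by have := i.isLt; omega⟩ = a i)
               then wordProb pi P z else 0) := by
          refine Finset.sum_congr rfl fun a _ => ?_
          rw [Finset.sum_mul]
          refine Finset.sum_congr rfl fun w _ => ?_
          rw [Finset.mul_sum]
      _ = _ := by
          refine Finset.sum_congr rfl fun a _ => ?_
          rw [hbridge u a, hbridge v a, sum_prefix_block P pi T u n a,
            sum_prefix_block P pi T v n a]
  rw [M1]
  have hΔ : blockDelta pi P n = ∑ a : Fin (n+1) → V, (wordProb pi P a)^2 := rfl
  rw [hΔ, Finset.mul_sum, Finset.sum_mul]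
  apply Finset.sum_le_sum
  intro a _
  have hq1 := hTb (u (Fin.last n)) (a 0)
  have hq2 := hTb (v (Fin.last n)) (a 0)
  have hq1n : 0 ≤ (P ^ T) (u (Fin.last n)) (a 0) := pow_entry_nonneg hP T _ _
  have hπa : 0 ≤ pi (a 0) := hpi.1 _
  have h1ε : 0 ≤ 1 - min ε 1 / 2 := by
    have := min_le_right ε 1; linarith
  have e1 : (1 - min ε 1/2) * pi (a 0) * ((1 - min ε 1/2) * pi (a 0)) ≤
      (P ^ T) (u (Fin.last n)) (a 0) * (P ^ T) (v (Fin.last n)) (a 0) :=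
    mul_le_mul hq1 hq2 (mul_nonneg h1ε hπa) hq1n
  have e2 : (1-ε) * (pi (a 0))^2 ≤
      (1 - min ε 1/2) * pi (a 0) * ((1 - min ε 1/2) * pi (a 0)) := by
    nlinarith [mul_nonneg (sub_nonneg.2 (min_le_left ε 1)) (sq_nonneg (pi (a 0))),
      mul_nonneg (mul_self_nonneg (min ε 1)) (sq_nonneg (pi (a 0)))]
  have hcomb : (1-ε) * (pi (a 0))^2 ≤
      (P ^ T) (u (Fin.last n)) (a 0) * (P ^ T) (v (Fin.last n)) (a 0) := le_trans e2 e1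
  have hwp : wordProb pi P a = pi (a 0) * ∏ i : Fin n, P (a i.castSucc) (a i.succ) := rfl
  have hpn : 0 ≤ ∏ i : Fin n, P (a i.castSucc) (a i.succ) :=
    Finset.prod_nonneg fun i _ => hP.1 _ _
  calc (1-ε) * (wordProb pi P a)^2 * (wordProb pi P u * wordProb pi P v)
      = ((1-ε) * (pi (a 0))^2) *
        ((wordProb pi P u * wordProb pi P v) * (∏ i : Fin n, P (a i.castSucc) (a i.succ))^2) := by
        rw [hwp]; ring
    _ ≤ ((P ^ T) (u (Fin.last n)) (a 0) * (P ^ T) (v (Fin.last n)) (a 0)) *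
        ((wordProb pi P u * wordProb pi P v) * (∏ i : Fin n, P (a i.castSucc) (a i.succ))^2) :=
        mul_le_mul_of_nonneg_right hcomb
          (mul_nonneg (mul_nonneg hu.le hv.le) (sq_nonneg _))
    _ = (wordProb pi P u * (P ^ T) (u (Fin.last n)) (a 0) *
          ∏ i : Fin n, P (a i.castSucc) (a i.succ)) *
        (wordProb pi P v * (P ^ T) (v (Fin.last n)) (a 0) *
          ∏ i : Fin n, P (a i.castSucc) (a i.succ)) := by ring
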